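/- For all a, n ∈ ℕ₀ and t ≥ 0, the joint probability mass function q(a,n,t) satisfies the differential equation d/dt q(a,n,t) = −Λ q(a,n,t) + Σ_{j=1}^{K₁} ν_j q(a−1, n−j, t) + Σ_{l=1}^{K₂} ρ_l q(a, n−l, t), where q(a', n', t) is taken to be 0 whenever a' < 0 or n' < 0; moreover the initial conditions hold: q(0,0,0) = 1 and q(a,n,0) = 0 whenever (a,n) ≠ (0,0). -/

import Mathlib

open Finset

/-- The index set `Θ(a, n)` of pairs `(r, s)` with `∑_j r_j = a` and
`∑_j j·r_j + ∑_l l·s_l = n` (`j : Fin K1` represents jump size `j + 1`, and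
`l : Fin K2` represents jump size `l + 1`). -/
def jointTheta (K1 K2 a n : ℕ) : Finset ((Fin K1 → ℕ) × (Fin K2 → ℕ)) :=
  ((Fintype.piFinset fun _ : Fin K1 => Finset.range (a + 1)) ×ˢ
      (Fintype.piFinset fun _ : Fin K2 => Finset.range (n + 1))).filter
    fun p => (∑ j : Fin K1, p.1 j = a) ∧
      (∑ j : Fin K1, (j.1 + 1) * p.1 j) + (∑ l : Fin K2, (l.1 + 1) * p.2 l) = n

/-- The joint probability mass function of the number of packets of jumps from a
tracked merging component (with rates `nu`) and the state of the merged GCP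
(the other components contributing aggregated rates `rho`). -/
noncomputable def jointPMF (K1 K2 : ℕ) (nu : Fin K1 → ℝ) (rho : Fin K2 → ℝ)
    (a n : ℕ) (t : ℝ) : ℝ :=
  ∑ p ∈ jointTheta K1 K2 a n,
    (∏ j : Fin K1, (nu j * t) ^ (p.1 j) / (Nat.factorial (p.1 j))) *
      (∏ l : Fin K2, (rho l * t) ^ (p.2 l) / (Nat.factorial (p.2 l))) *
      Real.exp (-((∑ j : Fin K1, nu j) + ∑ l : Fin K2, rho l) * t)

namespace JointAux

variable {K1 K2 : ℕ}

lemma mem_jointTheta {a n : ℕ} {p : (Fin K1 → ℕ) × (Fin K2 → ℕ)} :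
    p ∈ jointTheta K1 K2 a n ↔
      (∑ j : Fin K1, p.1 j = a) ∧
        (∑ j : Fin K1, (j.1 + 1) * p.1 j) + (∑ l : Fin K2, (l.1 + 1) * p.2 l) = n := by
  constructor
  · intro h; exact (Finset.mem_filter.mp h).2
  · intro h
    refine Finset.mem_filter.mpr ⟨Finset.mem_product.mpr ⟨?_, ?_⟩, h⟩
    · refine Fintype.mem_piFinset.mpr fun i => Finset.mem_range.mpr ?_
      have : p.1 i ≤ a :=
        h.1 ▸ Finset.single_le_sum (fun _ _ => Nat.zero_le _) (Finset.mem_univ i)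
      omega
    · refine Fintype.mem_piFinset.mpr fun i => Finset.mem_range.mpr ?_
      have h1 : (i.1 + 1) * p.2 i ≤ ∑ l : Fin K2, (l.1 + 1) * p.2 l :=
        Finset.single_le_sum (f := fun l : Fin K2 => (l.1 + 1) * p.2 l)
          (fun _ _ => Nat.zero_le _) (Finset.mem_univ i)
      have h2 : p.2 i ≤ (i.1 + 1) * p.2 i := Nat.le_mul_of_pos_left _ (Nat.succ_pos _)
      omega

/-- The coefficient of `t ^ dg p` in a summand of the pmf. -/
noncomputable def cf (nu : Fin K1 → ℝ) (rho : Fin K2 → ℝ)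
    (p : (Fin K1 → ℕ) × (Fin K2 → ℕ)) : ℝ :=
  (∏ j : Fin K1, nu j ^ p.1 j / (Nat.factorial (p.1 j))) *
    ∏ l : Fin K2, rho l ^ p.2 l / (Nat.factorial (p.2 l))

/-- The degree of a summand. -/
def dg (p : (Fin K1 → ℕ) × (Fin K2 → ℕ)) : ℕ :=
  (∑ j : Fin K1, p.1 j) + ∑ l : Fin K2, p.2 l

/-- The polynomial part of the pmf. -/
noncomputable def PP (nu : Fin K1 → ℝ) (rho : Fin K2 → ℝ) (a n : ℕ) (t : ℝ) : ℝ :=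
  ∑ p ∈ jointTheta K1 K2 a n, cf nu rho p * t ^ dg p

lemma jointPMF_eq (nu : Fin K1 → ℝ) (rho : Fin K2 → ℝ) (a n : ℕ) (t : ℝ) :
    jointPMF K1 K2 nu rho a n t =
      PP nu rho a n t * Real.exp (-((∑ j : Fin K1, nu j) + ∑ l : Fin K2, rho l) * t) := by
  rw [jointPMF, PP, Finset.sum_mul]
  refine Finset.sum_congr rfl fun p _ => ?_
  have h1 : (∏ j : Fin K1, (nu j * t) ^ (p.1 j) / (Nat.factorial (p.1 j)))
      = (∏ j : Fin K1, nu j ^ p.1 j / (Nat.factorial (p.1 j))) * t ^ (∑ j : Fin K1, p.1 j) := by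
    rw [← Finset.prod_pow_eq_pow_sum, ← Finset.prod_mul_distrib]
    refine Finset.prod_congr rfl fun j _ => ?_
    rw [mul_pow]; ring
  have h2 : (∏ l : Fin K2, (rho l * t) ^ (p.2 l) / (Nat.factorial (p.2 l)))
      = (∏ l : Fin K2, rho l ^ p.2 l / (Nat.factorial (p.2 l))) * t ^ (∑ l : Fin K2, p.2 l) := by
    rw [← Finset.prod_pow_eq_pow_sum, ← Finset.prod_mul_distrib]
    refine Finset.prod_congr rfl fun l _ => ?_
    rw [mul_pow]; ring
  rw [h1, h2, cf, dg, pow_add]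
  ring

/-- helper: splitting out one index of a sum after an update. -/
lemma sum_update_nat {K : ℕ} (f : Fin K → ℕ) (j : Fin K) (v : ℕ) (w : Fin K → ℕ → ℕ) :
    w j (f j) + ∑ i : Fin K, w i (Function.update f j v i)
      = w j v + ∑ i : Fin K, w i (f i) := by
  have h1 : ∑ i : Fin K, w i (Function.update f j v i)
      = w j v + ∑ i ∈ Finset.univ.erase j, w i (f i) := by
    rw [← Finset.add_sum_erase _ _ (Finset.mem_univ j), Function.update_self]
    congr 1
    refine Finset.sum_congr rfl fun i hi => ?_
    rw [Function.update_of_ne (Finset.mem_erase.mp hi).1]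
  have h2 : ∑ i : Fin K, w i (f i)
      = w j (f j) + ∑ i ∈ Finset.univ.erase j, w i (f i) :=
    (Finset.add_sum_erase _ _ (Finset.mem_univ j)).symm
  omega

/-- The scalar identity `ν · ν^(k)/(k)! = ν^(k+1)/(k+1)! · (k+1)`. -/
lemma fact_step (x : ℝ) (m : ℕ) (hm : 1 ≤ m) :
    x * (x ^ (m - 1) / (Nat.factorial (m - 1))) = x ^ m / (Nat.factorial m) * m := by
  obtain ⟨k, rfl⟩ : ∃ k, m = k + 1 := ⟨m - 1, by omega⟩
  simp only [Nat.add_sub_cancel, Nat.factorial_succ, pow_succ]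
  have hk : (Nat.factorial k : ℝ) ≠ 0 := Nat.cast_ne_zero.mpr (Nat.factorial_ne_zero k)
  have hk1 : ((k : ℝ) + 1) ≠ 0 := by positivity
  push_cast
  field_simp

/-- Key identity, first-component side. -/
lemma sum_nu (nu : Fin K1 → ℝ) (rho : Fin K2 → ℝ) (a n : ℕ) (t : ℝ) (j : Fin K1) :
    ∑ p ∈ jointTheta K1 K2 a n, cf nu rho p * (p.1 j : ℝ) * t ^ (dg p - 1)
      = nu j * (if 1 ≤ a ∧ j.1 + 1 ≤ n then PP nu rho (a - 1) (n - (j.1 + 1)) t else 0) := by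
  by_cases hc : 1 ≤ a ∧ j.1 + 1 ≤ n
  · rw [if_pos hc, PP, Finset.mul_sum]
    rw [← Finset.sum_filter_of_ne
      (p := fun p : (Fin K1 → ℕ) × (Fin K2 → ℕ) => 1 ≤ p.1 j) (fun p _ hne => by
        by_contra h
        have : p.1 j = 0 := by omega
        simp [this] at hne)]
    refine Finset.sum_nbij'
      (fun p => (Function.update p.1 j (p.1 j - 1), p.2))
      (fun p => (Function.update p.1 j (p.1 j + 1), p.2)) ?_ ?_ ?_ ?_ ?_
    · -- forward membership
      rintro p hp
      rw [Finset.mem_filter] at hp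
      obtain ⟨hmem, hj1⟩ := hp
      obtain ⟨h1, h2⟩ := mem_jointTheta.mp hmem
      rw [mem_jointTheta]
      dsimp only
      refine ⟨?_, ?_⟩
      · have := sum_update_nat p.1 j (p.1 j - 1) (fun _ x => x)
        omega
      · have hupd := sum_update_nat p.1 j (p.1 j - 1) (fun i x => (i.1 + 1) * x)
        have hmul : (j.1 + 1) * (p.1 j - 1) = (j.1 + 1) * p.1 j - (j.1 + 1) := by
          rw [Nat.mul_sub]; omega
        have hle : (j.1 + 1) ≤ (j.1 + 1) * p.1 j := Nat.le_mul_of_pos_right _ (by omega)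
        have hsle : (j.1 + 1) * p.1 j ≤ ∑ i : Fin K1, (i.1 + 1) * p.1 i :=
          Finset.single_le_sum (f := fun i : Fin K1 => (i.1 + 1) * p.1 i)
            (fun _ _ => Nat.zero_le _) (Finset.mem_univ j)
        omega
    · -- backward membership
      rintro p hp
      obtain ⟨h1, h2⟩ := mem_jointTheta.mp hp
      rw [Finset.mem_filter]
      constructor
      · rw [mem_jointTheta]
        dsimp only
        refine ⟨?_, ?_⟩
        · have := sum_update_nat p.1 j (p.1 j + 1) (fun _ x => x)
          omega
        · have hupd := sum_update_nat p.1 j (p.1 j + 1) (fun i x => (i.1 + 1) * x)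
          have hmul : (j.1 + 1) * (p.1 j + 1) = (j.1 + 1) * p.1 j + (j.1 + 1) :=
            Nat.mul_succ _ _
          omega
      · simp [Function.update_self]
    · -- left inverse
      rintro p hp
      rw [Finset.mem_filter] at hp
      obtain ⟨_, hj1⟩ := hp
      ext i
      · simp only [Function.update_idem, Function.update_self]
        by_cases hij : i = j
        · subst hij; simp [Function.update_self]; omega
        · simp [Function.update_of_ne hij]
      · rfl
    · -- right inverse
      rintro p hp
      dsimp only
      ext i
      · by_cases hij : i = j
        · subst hij; simp [Function.update_idem, Function.update_self]
        · simp [Function.update_idem, Function.update_of_ne hij]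
      · rfl
    · -- term equality
      rintro p hp
      rw [Finset.mem_filter] at hp
      obtain ⟨hmem, hj1⟩ := hp
      obtain ⟨h1, h2⟩ := mem_jointTheta.mp hmem
      -- degree identity
      have hdg : dg ((Function.update p.1 j (p.1 j - 1), p.2)) = dg p - 1 := by
        have := sum_update_nat p.1 j (p.1 j - 1) (fun _ x => x)
        unfold dg
        dsimp only
        omega
      have hdg1 : 1 ≤ dg p := by
        unfold dg
        have : p.1 j ≤ ∑ i : Fin K1, p.1 i :=
          Finset.single_le_sum (fun _ _ => Nat.zero_le _) (Finset.mem_univ j)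
        omega
      -- coefficient identity
      have hA : (∏ i : Fin K1, nu i ^ (Function.update p.1 j (p.1 j - 1) i) /
          (Nat.factorial (Function.update p.1 j (p.1 j - 1) i)))
          = (nu j ^ (p.1 j - 1) / (Nat.factorial (p.1 j - 1))) *
            ∏ i ∈ Finset.univ.erase j, nu i ^ p.1 i / (Nat.factorial (p.1 i)) := by
        rw [← Finset.mul_prod_erase _ _ (Finset.mem_univ j), Function.update_self]
        congr 1
        refine Finset.prod_congr rfl fun i hi => ?_
        rw [Function.update_of_ne (Finset.mem_erase.mp hi).1]
      have hA0 : (∏ i : Fin K1, nu i ^ p.1 i / (Nat.factorial (p.1 i)))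
          = (nu j ^ p.1 j / (Nat.factorial (p.1 j))) *
            ∏ i ∈ Finset.univ.erase j, nu i ^ p.1 i / (Nat.factorial (p.1 i)) :=
        (Finset.mul_prod_erase _ _ (Finset.mem_univ j)).symm
      have key := fact_step (nu j) (p.1 j) hj1
      unfold cf
      simp only [hdg, hA, hA0]
      set D := ∏ i ∈ Finset.univ.erase j, nu i ^ p.1 i / (Nat.factorial (p.1 i)) with hD
      set B := ∏ l : Fin K2, rho l ^ p.2 l / (Nat.factorial (p.2 l)) with hB
      calc nu j ^ p.1 j / (Nat.factorial (p.1 j)) * D * B * (p.1 j : ℝ) * t ^ (dg p - 1)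
          = (nu j ^ p.1 j / (Nat.factorial (p.1 j)) * (p.1 j : ℝ)) * (D * B * t ^ (dg p - 1)) := by
            ring
        _ = (nu j * (nu j ^ (p.1 j - 1) / (Nat.factorial (p.1 j - 1)))) *
              (D * B * t ^ (dg p - 1)) := by rw [key]
        _ = nu j * (nu j ^ (p.1 j - 1) / (Nat.factorial (p.1 j - 1)) * D * B * t ^ (dg p - 1)) := by
            ring
  · rw [if_neg hc, mul_zero]
    refine Finset.sum_eq_zero fun p hp => ?_
    obtain ⟨h1, h2⟩ := mem_jointTheta.mp hp
    have hz : p.1 j = 0 := by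
      by_contra h
      have ha : p.1 j ≤ a :=
        h1 ▸ Finset.single_le_sum (fun _ _ => Nat.zero_le _) (Finset.mem_univ j)
      have hsle : (j.1 + 1) * p.1 j ≤ n := by
        have : (j.1 + 1) * p.1 j ≤ ∑ i : Fin K1, (i.1 + 1) * p.1 i :=
          Finset.single_le_sum (f := fun i : Fin K1 => (i.1 + 1) * p.1 i)
            (fun _ _ => Nat.zero_le _) (Finset.mem_univ j)
        omega
      have hle : (j.1 + 1) ≤ (j.1 + 1) * p.1 j := Nat.le_mul_of_pos_right _ (by omega)
      omega
    simp [hz]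

/-- Key identity, second-component side. -/
lemma sum_rho (nu : Fin K1 → ℝ) (rho : Fin K2 → ℝ) (a n : ℕ) (t : ℝ) (l : Fin K2) :
    ∑ p ∈ jointTheta K1 K2 a n, cf nu rho p * (p.2 l : ℝ) * t ^ (dg p - 1)
      = rho l * (if l.1 + 1 ≤ n then PP nu rho a (n - (l.1 + 1)) t else 0) := by
  by_cases hc : l.1 + 1 ≤ n
  · rw [if_pos hc, PP, Finset.mul_sum]
    rw [← Finset.sum_filter_of_ne
      (p := fun p : (Fin K1 → ℕ) × (Fin K2 → ℕ) => 1 ≤ p.2 l) (fun p _ hne => by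
        by_contra h
        have : p.2 l = 0 := by omega
        simp [this] at hne)]
    refine Finset.sum_nbij'
      (fun p => (p.1, Function.update p.2 l (p.2 l - 1)))
      (fun p => (p.1, Function.update p.2 l (p.2 l + 1))) ?_ ?_ ?_ ?_ ?_
    · rintro p hp
      rw [Finset.mem_filter] at hp
      obtain ⟨hmem, hl1⟩ := hp
      obtain ⟨h1, h2⟩ := mem_jointTheta.mp hmem
      rw [mem_jointTheta]
      dsimp only
      refine ⟨h1, ?_⟩
      have hupd := sum_update_nat p.2 l (p.2 l - 1) (fun i x => (i.1 + 1) * x)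
      have hmul : (l.1 + 1) * (p.2 l - 1) = (l.1 + 1) * p.2 l - (l.1 + 1) := by
        rw [Nat.mul_sub]; omega
      have hle : (l.1 + 1) ≤ (l.1 + 1) * p.2 l := Nat.le_mul_of_pos_right _ (by omega)
      have hsle : (l.1 + 1) * p.2 l ≤ ∑ i : Fin K2, (i.1 + 1) * p.2 i :=
        Finset.single_le_sum (f := fun i : Fin K2 => (i.1 + 1) * p.2 i)
          (fun _ _ => Nat.zero_le _) (Finset.mem_univ l)
      omega
    · rintro p hp
      obtain ⟨h1, h2⟩ := mem_jointTheta.mp hp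
      rw [Finset.mem_filter]
      refine ⟨mem_jointTheta.mpr ⟨h1, ?_⟩, by simp [Function.update_self]⟩
      dsimp only
      have hupd := sum_update_nat p.2 l (p.2 l + 1) (fun i x => (i.1 + 1) * x)
      have hmul : (l.1 + 1) * (p.2 l + 1) = (l.1 + 1) * p.2 l + (l.1 + 1) := Nat.mul_succ _ _
      omega
    · rintro p hp
      rw [Finset.mem_filter] at hp
      obtain ⟨_, hl1⟩ := hp
      ext i
      · rfl
      · by_cases hil : i = l
        · subst hil; simp [Function.update_idem, Function.update_self]; omega
        · simp [Function.update_idem, Function.update_of_ne hil]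
    · rintro p hp
      ext i
      · rfl
      · by_cases hil : i = l
        · subst hil; simp [Function.update_idem, Function.update_self]
        · simp [Function.update_idem, Function.update_of_ne hil]
    · rintro p hp
      rw [Finset.mem_filter] at hp
      obtain ⟨hmem, hl1⟩ := hp
      obtain ⟨h1, h2⟩ := mem_jointTheta.mp hmem
      have hdg : dg ((p.1, Function.update p.2 l (p.2 l - 1))) = dg p - 1 := by
        have := sum_update_nat p.2 l (p.2 l - 1) (fun _ x => x)
        unfold dg
        dsimp only
        omega
      have hA : (∏ i : Fin K2, rho i ^ (Function.update p.2 l (p.2 l - 1) i) /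
          (Nat.factorial (Function.update p.2 l (p.2 l - 1) i)))
          = (rho l ^ (p.2 l - 1) / (Nat.factorial (p.2 l - 1))) *
            ∏ i ∈ Finset.univ.erase l, rho i ^ p.2 i / (Nat.factorial (p.2 i)) := by
        rw [← Finset.mul_prod_erase _ _ (Finset.mem_univ l), Function.update_self]
        congr 1
        refine Finset.prod_congr rfl fun i hi => ?_
        rw [Function.update_of_ne (Finset.mem_erase.mp hi).1]
      have hA0 : (∏ i : Fin K2, rho i ^ p.2 i / (Nat.factorial (p.2 i)))
          = (rho l ^ p.2 l / (Nat.factorial (p.2 l))) *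
            ∏ i ∈ Finset.univ.erase l, rho i ^ p.2 i / (Nat.factorial (p.2 i)) :=
        (Finset.mul_prod_erase _ _ (Finset.mem_univ l)).symm
      have key := fact_step (rho l) (p.2 l) hl1
      unfold cf
      simp only [hdg, hA, hA0]
      set D := ∏ i ∈ Finset.univ.erase l, rho i ^ p.2 i / (Nat.factorial (p.2 i)) with hD
      set A := ∏ i : Fin K1, nu i ^ p.1 i / (Nat.factorial (p.1 i)) with hA1
      calc A * (rho l ^ p.2 l / (Nat.factorial (p.2 l)) * D) * (p.2 l : ℝ) * t ^ (dg p - 1)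
          = (rho l ^ p.2 l / (Nat.factorial (p.2 l)) * (p.2 l : ℝ)) * (A * D * t ^ (dg p - 1)) := by
            ring
        _ = (rho l * (rho l ^ (p.2 l - 1) / (Nat.factorial (p.2 l - 1)))) *
              (A * D * t ^ (dg p - 1)) := by rw [key]
        _ = rho l * (A * (rho l ^ (p.2 l - 1) / (Nat.factorial (p.2 l - 1)) * D)
              * t ^ (dg p - 1)) := by ring
  · rw [if_neg hc, mul_zero]
    refine Finset.sum_eq_zero fun p hp => ?_
    obtain ⟨h1, h2⟩ := mem_jointTheta.mp hp
    have hz : p.2 l = 0 := by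
      by_contra h
      have hsle : (l.1 + 1) * p.2 l ≤ n := by
        have : (l.1 + 1) * p.2 l ≤ ∑ i : Fin K2, (i.1 + 1) * p.2 i :=
          Finset.single_le_sum (f := fun i : Fin K2 => (i.1 + 1) * p.2 i)
            (fun _ _ => Nat.zero_le _) (Finset.mem_univ l)
        omega
      have hle : (l.1 + 1) ≤ (l.1 + 1) * p.2 l := Nat.le_mul_of_pos_right _ (by omega)
      omega
    simp [hz]

lemma hasDerivAt_PP (nu : Fin K1 → ℝ) (rho : Fin K2 → ℝ) (a n : ℕ) (t : ℝ) :
    HasDerivAt (fun s => PP nu rho a n s)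
      ((∑ j : Fin K1, nu j *
          (if 1 ≤ a ∧ j.1 + 1 ≤ n then PP nu rho (a - 1) (n - (j.1 + 1)) t else 0))
        + ∑ l : Fin K2, rho l *
          (if l.1 + 1 ≤ n then PP nu rho a (n - (l.1 + 1)) t else 0)) t := by
  have h : HasDerivAt (fun s => PP nu rho a n s)
      (∑ p ∈ jointTheta K1 K2 a n, cf nu rho p * ((dg p : ℝ) * t ^ (dg p - 1))) t := by
    apply HasDerivAt.fun_sum
    intro p _
    exact (hasDerivAt_pow (dg p) t).const_mul (cf nu rho p)
  convert h using 1
  have : ∑ p ∈ jointTheta K1 K2 a n, cf nu rho p * ((dg p : ℝ) * t ^ (dg p - 1))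
      = (∑ j : Fin K1, ∑ p ∈ jointTheta K1 K2 a n,
          cf nu rho p * (p.1 j : ℝ) * t ^ (dg p - 1))
        + ∑ l : Fin K2, ∑ p ∈ jointTheta K1 K2 a n,
          cf nu rho p * (p.2 l : ℝ) * t ^ (dg p - 1) := by
    rw [Finset.sum_comm (s := Finset.univ) (t := jointTheta K1 K2 a n),
      Finset.sum_comm (s := Finset.univ) (t := jointTheta K1 K2 a n), ← Finset.sum_add_distrib]
    refine Finset.sum_congr rfl fun p _ => ?_
    have hcast : (dg p : ℝ) = (∑ j : Fin K1, (p.1 j : ℝ)) + ∑ l : Fin K2, (p.2 l : ℝ) := by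
      unfold dg; push_cast; ring
    rw [hcast, ← Finset.sum_mul, ← Finset.sum_mul, ← Finset.mul_sum, ← Finset.mul_sum]
    ring
  rw [this]
  congr 1
  · exact (Finset.sum_congr rfl fun j _ => sum_nu nu rho a n t j).symm
  · exact (Finset.sum_congr rfl fun l _ => sum_rho nu rho a n t l).symm

lemma pmf_at_zero (nu : Fin K1 → ℝ) (rho : Fin K2 → ℝ) (a n : ℕ) :
    jointPMF K1 K2 nu rho a n 0 = if a = 0 ∧ n = 0 then 1 else 0 := by
  have hsummand : ∀ p ∈ jointTheta K1 K2 a n,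
      (∏ j : Fin K1, (nu j * 0) ^ (p.1 j) / (Nat.factorial (p.1 j))) *
        (∏ l : Fin K2, (rho l * 0) ^ (p.2 l) / (Nat.factorial (p.2 l))) *
        Real.exp (-((∑ j : Fin K1, nu j) + ∑ l : Fin K2, rho l) * 0)
      = if p = (0, 0) then 1 else 0 := by
    intro p _
    by_cases hp : p = (0, 0)
    · subst hp; simp
    · rw [if_neg hp]
      have : (∃ j, p.1 j ≠ 0) ∨ (∃ l, p.2 l ≠ 0) := by
        by_contra h
        push_neg at h
        apply hp
        ext i
        · exact h.1 i
        · exact h.2 i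
      rcases this with ⟨j, hj⟩ | ⟨l, hl⟩
      · have : (nu j * 0) ^ (p.1 j) / (Nat.factorial (p.1 j)) = 0 := by
          rw [mul_zero, zero_pow hj, zero_div]
        rw [Finset.prod_eq_zero (Finset.mem_univ j) this, zero_mul, zero_mul]
      · have : (rho l * 0) ^ (p.2 l) / (Nat.factorial (p.2 l)) = 0 := by
          rw [mul_zero, zero_pow hl, zero_div]
        rw [Finset.prod_eq_zero (Finset.mem_univ l) this, mul_zero, zero_mul]
  rw [jointPMF, Finset.sum_congr rfl hsummand, Finset.sum_ite_eq' (jointTheta K1 K2 a n) (0, 0)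
    (fun _ => (1 : ℝ))]
  have hmem : (((0 : Fin K1 → ℕ), (0 : Fin K2 → ℕ)) ∈ jointTheta K1 K2 a n) ↔ (a = 0 ∧ n = 0) := by
    rw [mem_jointTheta]
    simp [eq_comm]
  by_cases hc : a = 0 ∧ n = 0
  · rw [if_pos (hmem.mpr hc), if_pos hc]
  · rw [if_neg (fun h => hc (hmem.mp h)), if_neg hc]

end JointAux

/-- The joint pmf `q(a, n, t)` of the number of packets from the tracked component
and the state of the merged GCP satisfies the forward differential equation
`q'(a,n,t) = −Λ q(a,n,t) + Σ_j ν_j q(a−1, n−j, t) + Σ_l ρ_l q(a, n−l, t)`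
(terms with a negative index vanish), with initial conditions `q(0,0,0) = 1` and
`q(a,n,0) = 0` for `(a,n) ≠ (0,0)`. -/
theorem jointPMF_ode (K1 K2 : ℕ) (hK1 : 1 ≤ K1) (hK2 : 1 ≤ K2)
    (nu : Fin K1 → ℝ) (rho : Fin K2 → ℝ)
    (hnu : ∀ j, 0 ≤ nu j) (hrho : ∀ l, 0 ≤ rho l) :
    (∀ (a n : ℕ) (t : ℝ), 0 ≤ t →
      HasDerivAt (fun s => jointPMF K1 K2 nu rho a n s)
        (-((∑ j : Fin K1, nu j) + ∑ l : Fin K2, rho l) * jointPMF K1 K2 nu rho a n t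
          + (∑ j : Fin K1, nu j *
              (if 1 ≤ a ∧ j.1 + 1 ≤ n then
                jointPMF K1 K2 nu rho (a - 1) (n - (j.1 + 1)) t else 0))
          + (∑ l : Fin K2, rho l *
              (if l.1 + 1 ≤ n then jointPMF K1 K2 nu rho a (n - (l.1 + 1)) t else 0)))
        t) ∧
    jointPMF K1 K2 nu rho 0 0 0 = 1 ∧
    (∀ a n : ℕ, (a, n) ≠ (0, 0) → jointPMF K1 K2 nu rho a n 0 = 0) := by
  refine ⟨?_, ?_, ?_⟩
  · intro a n t _
    set Λ : ℝ := (∑ j : Fin K1, nu j) + ∑ l : Fin K2, rho l with hΛ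
    have hE : HasDerivAt (fun s : ℝ => Real.exp (-Λ * s)) (-Λ * Real.exp (-Λ * t)) t := by
      have := ((hasDerivAt_id t).const_mul (-Λ)).exp
      simpa [mul_comm] using this
    have hP := JointAux.hasDerivAt_PP nu rho a n t
    have hq : HasDerivAt (fun s => JointAux.PP nu rho a n s * Real.exp (-Λ * s))
        (((∑ j : Fin K1, nu j *
            (if 1 ≤ a ∧ j.1 + 1 ≤ n then JointAux.PP nu rho (a - 1) (n - (j.1 + 1)) t else 0))
          + ∑ l : Fin K2, rho l *
            (if l.1 + 1 ≤ n then JointAux.PP nu rho a (n - (l.1 + 1)) t else 0))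
          * Real.exp (-Λ * t)
          + JointAux.PP nu rho a n t * (-Λ * Real.exp (-Λ * t))) t := hP.mul hE
    have hfun : (fun s => jointPMF K1 K2 nu rho a n s)
        = fun s => JointAux.PP nu rho a n s * Real.exp (-Λ * s) := by
      funext s; exact JointAux.jointPMF_eq nu rho a n s
    rw [hfun]
    convert hq using 1
    simp only [JointAux.jointPMF_eq nu rho, Finset.sum_mul, add_mul, mul_ite, ite_mul,
      zero_mul, mul_zero, mul_assoc]
    ring
  · rw [JointAux.pmf_at_zero]; simp
  · intro a n hne
    rw [JointAux.pmf_at_zero]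
    rw [if_neg]
    intro h
    exact hne (by simp [h.1, h.2])
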